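/- Let u : ℤ × ℕ⁺ → ℂ be a doubly-indexed sequence satisfying the recursion u^{(k)} determined by: u^{(0)}_{n,m} = q·(δ_{n,1}+δ_{n,−1})·δ_{m,1}, and for k ≥ 1, u^{(k)}_{n,m} is a finite sum over decompositions n = n1 + n2, k1 + k2 = k − 1, of terms proportional to v(m,m1,m2)·u^{(k1)}_{n1,m1}·u^{(k2)}_{n2,m2} (with v(m,m1,m2) = 0 unless m + m1 + m2 is odd), plus linear terms l^{(r)}_{n,m} u^{(k−r)}_{n,m} for 2 ≤ r ≤ k−1. Then for all (n,m) ≠ (±1,1): u^{(k)}_{n,m} = 0 whenever |n| > k + 1 or m is even. -/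

import Mathlib

/-- Lemma 1 of the paper: for the Lindstedt coefficients `u^{(k)}_{n,m}` defined
by the recursion 2.2, one has `u^{(k)}_{n,m} = 0` whenever `|n| > k + 1` or `m`
is even, for `(n, m) ≠ (±1, 1)`. -/
theorem lindstedt_coefficients_support (q : ℂ) (u : ℕ → ℤ → ℕ → ℂ)
    (v : ℕ → ℕ → ℕ → ℂ) (l : ℕ → ℤ → ℕ → ℂ)
    (c : ℕ → ℤ → ℕ → ℕ → ℤ → ℕ → ℕ → ℂ)
    (hv : ∀ m m1 m2 : ℕ, Even (m + m1 + m2) → v m m1 m2 = 0)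
    (h0 : ∀ (n : ℤ) (m : ℕ), u 0 n m = if (n = 1 ∨ n = -1) ∧ m = 1 then q else 0)
    (hrec : ∀ k : ℕ, 1 ≤ k → ∀ (n : ℤ) (m : ℕ),
      u k n m =
        (∑ k1 ∈ Finset.range k, ∑' n1 : ℤ, ∑' m1 : ℕ, ∑' m2 : ℕ,
          c k n m k1 n1 m1 m2 * v m m1 m2 * u k1 n1 m1 * u (k - 1 - k1) (n - n1) m2)
        + ∑ r ∈ Finset.Icc 2 (k - 1), l r n m * u (k - r) n m) :
    ∀ (k : ℕ) (n : ℤ) (m : ℕ), ¬((n = 1 ∨ n = -1) ∧ m = 1) →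
      ((k : ℤ) + 1 < |n| ∨ Even m) → u k n m = 0 := by
  intro k
  induction k using Nat.strong_induction_on with
  | _ k ih =>
    intro n m hnm hcond
    match k, ih, hcond with
    | 0, ih, hcond => rw [h0 n m, if_neg hnm]
    | (k' + 1), ih, hcond =>
      -- if u is nonzero at a lower order, the frequency is bounded
      have habs : ∀ (kk : ℕ) (nn : ℤ) (mm : ℕ), kk < k' + 1 → u kk nn mm ≠ 0 →
          |nn| ≤ (kk : ℤ) + 1 := by
        intro kk nn mm hk hne
        by_contra h
        push_neg at h
        by_cases hex : (nn = 1 ∨ nn = -1) ∧ mm = 1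
        · rcases hex.1 with h1 | h1 <;> rw [h1] at h <;> simp at h <;> omega
        · exact hne (ih kk hk nn mm hex (Or.inl h))
      -- each quadratic summand vanishes
      have hquad : ∀ k1 ∈ Finset.range (k' + 1), ∀ (n1 : ℤ) (m1 m2 : ℕ),
          c (k' + 1) n m k1 n1 m1 m2 * v m m1 m2 * u k1 n1 m1 *
            u (k' + 1 - 1 - k1) (n - n1) m2 = 0 := by
        intro k1 hk1 n1 m1 m2
        simp only [Finset.mem_range] at hk1
        have hk2 : k' + 1 - 1 - k1 = k' - k1 := by omega
        rw [hk2]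
        have hk2lt : k' - k1 < k' + 1 := by omega
        rcases hcond with hn | hm
        · by_cases h1 : u k1 n1 m1 = 0
          · rw [h1]; ring
          by_cases h2 : u (k' - k1) (n - n1) m2 = 0
          · rw [h2]; ring
          exfalso
          have b1 := habs k1 n1 m1 hk1 h1
          have b2 := habs (k' - k1) (n - n1) m2 hk2lt h2
          have hb : |n| ≤ (k' : ℤ) + 2 := by
            calc |n| = |n1 + (n - n1)| := by congr 1; ring
              _ ≤ |n1| + |n - n1| := abs_add_le _ _
              _ ≤ ((k1 : ℤ) + 1) + (((k' - k1 : ℕ) : ℤ) + 1) := add_le_add b1 b2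
              _ ≤ (k' : ℤ) + 2 := by
                have : (k1 : ℤ) + ((k' - k1 : ℕ) : ℤ) = (k' : ℤ) := by omega
                linarith
          have hcast : ((k' + 1 : ℕ) : ℤ) = (k' : ℤ) + 1 := by push_cast; ring
          rw [hcast] at hn
          linarith
        · by_cases hveven : Even (m + m1 + m2)
          · rw [hv _ _ _ hveven]; ring
          · have hpar : Even m1 ∨ Even m2 := by
              by_contra hc
              push_neg at hc
              obtain ⟨hc1, hc2⟩ := hc
              apply hveven
              rw [Nat.even_iff] at hm ⊢
              rw [Nat.not_even_iff] at hc1 hc2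
              omega
            rcases hpar with h | h
            · have hz : u k1 n1 m1 = 0 := by
                apply ih k1 hk1 n1 m1 _ (Or.inr h)
                intro hex
                rw [hex.2] at h
                exact Nat.not_even_one h
              rw [hz]; ring
            · have hz : u (k' - k1) (n - n1) m2 = 0 := by
                apply ih (k' - k1) hk2lt (n - n1) m2 _ (Or.inr h)
                intro hex
                rw [hex.2] at h
                exact Nat.not_even_one h
              rw [hz]; ring
      -- each linear summand vanishes
      have hlin : ∀ r ∈ Finset.Icc 2 (k' + 1 - 1), l r n m * u (k' + 1 - r) n m = 0 := by
        intro r hr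
        simp only [Finset.mem_Icc] at hr
        have hz : u (k' + 1 - r) n m = 0 := by
          apply ih (k' + 1 - r) (by omega) n m hnm
          rcases hcond with hn | hm
          · left
            have hle : ((k' + 1 - r : ℕ) : ℤ) ≤ ((k' + 1 : ℕ) : ℤ) := by
              exact_mod_cast Nat.sub_le _ _
            linarith
          · right; exact hm
        rw [hz, mul_zero]
      rw [hrec (k' + 1) (by omega) n m]
      rw [Finset.sum_eq_zero hlin, add_zero]
      apply Finset.sum_eq_zero
      intro k1 hk1
      have e2 : ∀ (n1 : ℤ) (m1 : ℕ),
          (∑' m2 : ℕ, c (k' + 1) n m k1 n1 m1 m2 * v m m1 m2 * u k1 n1 m1 *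
            u (k' + 1 - 1 - k1) (n - n1) m2) = 0 := by
        intro n1 m1
        rw [tsum_congr (fun m2 => hquad k1 hk1 n1 m1 m2), tsum_zero]
      have e1 : ∀ (n1 : ℤ),
          (∑' m1 : ℕ, ∑' m2 : ℕ, c (k' + 1) n m k1 n1 m1 m2 * v m m1 m2 * u k1 n1 m1 *
            u (k' + 1 - 1 - k1) (n - n1) m2) = 0 := by
        intro n1
        rw [tsum_congr (fun m1 => e2 n1 m1), tsum_zero]
      rw [tsum_congr e1, tsum_zero]
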